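/- arXiv:1207.0289 — 2 statements merged into one kernel-verified Lean document; each statement's English description precedes it below -/
import Mathlib

section
/- Every NIP theory is resilient: if (a_i)_{i∈ℚ} and (b_j)_{j∈ℚ} are indiscernible sequences with a₀ = b₀, (b_j) indiscernible over (a_i)_{i≠0}, and {φ(x,a_i)}_{i∈ℚ} consistent, then {φ(x,b_j)}_{j∈ℚ} is consistent. -/
open FirstOrder FirstOrder.Language

namespace Paper

variable {L : Language} {M : Type*} [L.Structure M]

/-- `a` is an indiscernible sequence of `α`-tuples over the parameter set `B`. -/
def IndiscSeqOver (B : Set M) {ι : Type*} [LinearOrder ι] {α : Type*}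
    (a : ι → α → M) : Prop :=
  ∀ (n m : ℕ) (φ : L.Formula ((Fin n × α) ⊕ Fin m)) (b : Fin m → M),
    (∀ k, b k ∈ B) →
    ∀ (i j : Fin n → ι), StrictMono i → StrictMono j →
      (φ.Realize (Sum.elim (fun p => a (i p.1) p.2) b) ↔
        φ.Realize (Sum.elim (fun p => a (j p.1) p.2) b))

/-- `a` is an indiscernible array over `B`: the type over `B` of a finite sub-array
depends only on the order types of the row- and column-index sets. -/
def IndiscArrayOver (B : Set M) {α : Type*} (a : ℕ → ℕ → α → M) : Prop :=
  ∀ (n m : ℕ) (φ : L.Formula ((Fin n × Fin n × α) ⊕ Fin m)) (b : Fin m → M),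
    (∀ k, b k ∈ B) →
    ∀ (i i' j j' : Fin n → ℕ), StrictMono i → StrictMono i' → StrictMono j → StrictMono j' →
      (φ.Realize (Sum.elim (fun p => a (i p.1) (j p.2.1) p.2.2) b) ↔
        φ.Realize (Sum.elim (fun p => a (i' p.1) (j' p.2.1) p.2.2) b))

/-- A strongly indiscernible array over `B`: an indiscernible array whose rows are
mutually indiscernible over `B`. -/
def StronglyIndiscArrayOver (B : Set M) {α : Type*} (a : ℕ → ℕ → α → M) : Prop :=
  IndiscArrayOver (L := L) B a ∧
    ∀ i₀ : ℕ, IndiscSeqOver (L := L) (B ∪ {x | ∃ i j t, i ≠ i₀ ∧ a i j t = x}) (a i₀)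

/-- The family `{φ(x, c i)}_{i ∈ s}` is inconsistent for every `k`-element set `s`. -/
def KInconsistent (k : ℕ) {β α : Type*} (φ : L.Formula (β ⊕ α)) (c : ℕ → α → M) : Prop :=
  ∀ s : Finset ℕ, s.card = k → ¬∃ x : β → M, ∀ i ∈ s, φ.Realize (Sum.elim x (c i))

/-- The formula `φ(x, y)` has the tree property of the second kind. -/
def HasTP2 {β α : Type*} (φ : L.Formula (β ⊕ α)) : Prop :=
  ∃ (a : ℕ → ℕ → α → M) (k : ℕ),
    (∀ i, KInconsistent k φ (a i)) ∧
      ∀ f : ℕ → ℕ, ∃ x : β → M, ∀ i, φ.Realize (Sum.elim x (a i (f i)))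

/-- The theory (of the monster model `M`) is NTP₂: no formula has TP₂. -/
def NTP2 (L : Language) (M : Type*) [L.Structure M] : Prop :=
  ∀ (n m : ℕ) (φ : L.Formula (Fin n ⊕ Fin m)), ¬HasTP2 (M := M) φ

/-- `φ(x, a)` divides over `A`. -/
def Divides {β α : Type*} (φ : L.Formula (β ⊕ α)) (a : α → M) (A : Set M) : Prop :=
  ∃ c : ℕ → α → M, IndiscSeqOver (L := L) A c ∧ c 0 = a ∧
    ¬∃ x : β → M, ∀ i, φ.Realize (Sum.elim x (c i))

/-- `φ(x, a)` array-divides over `A`. -/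
def ArrayDivides {β α : Type*} (φ : L.Formula (β ⊕ α)) (a : α → M) (A : Set M) : Prop :=
  ∃ c : ℕ → ℕ → α → M, IndiscArrayOver (L := L) A c ∧ c 0 0 = a ∧
    ¬∃ x : β → M, ∀ i j, φ.Realize (Sum.elim x (c i j))

/-- `φ(x, a)` forks over `A`: it implies a finite disjunction of formulas, each
dividing over `A`. -/
def Forks {β α : Type*} (φ : L.Formula (β ⊕ α)) (a : α → M) (A : Set M) : Prop :=
  ∃ (k : ℕ) (m : Fin k → ℕ) (ψ : ∀ i, L.Formula (β ⊕ Fin (m i))) (c : ∀ i, Fin (m i) → M),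
    (∀ i, Divides (ψ i) (c i) A) ∧
      ∀ x : β → M, φ.Realize (Sum.elim x a) → ∃ i, (ψ i).Realize (Sum.elim x (c i))

/-- The partial type `{φ(x, c i)}_{i ∈ ω}` forks over `A`. -/
def FamForks {β α : Type*} (φ : L.Formula (β ⊕ α)) (c : ℕ → α → M) (A : Set M) : Prop :=
  ∃ (k : ℕ) (m : Fin k → ℕ) (ψ : ∀ i, L.Formula (β ⊕ Fin (m i))) (d : ∀ i, Fin (m i) → M),
    (∀ i, Divides (ψ i) (d i) A) ∧
      ∀ x : β → M, (∀ i, φ.Realize (Sum.elim x (c i))) → ∃ i, (ψ i).Realize (Sum.elim x (d i))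

/-- The complete type `tp(d / C)` forks over `A`: some formula over `C` realized by
`d` forks over `A`. -/
def TypeForksOver {β : Type*} (d : β → M) (C A : Set M) : Prop :=
  ∃ (m : ℕ) (φ : L.Formula (β ⊕ Fin m)) (c : Fin m → M),
    (∀ k, c k ∈ C) ∧ φ.Realize (Sum.elim d c) ∧ Forks φ c A

/-- `C` is an extension base: no type over `C` forks over `C`. -/
def IsExtensionBase (C : Set M) : Prop :=
  ∀ (n : ℕ) (d : Fin n → M), ¬TypeForksOver (L := L) d C C

/-- `d ⫝_A b` : `tp(d / A b)` does not fork over `A`. -/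
def IndepOver (A : Set M) {β γ : Type*} (d : β → M) (b : γ → M) : Prop :=
  ¬TypeForksOver (L := L) d (A ∪ Set.range b) A

/-- `d` and `e` have the same type over `A`. -/
def EqTpOver (A : Set M) {α : Type*} (d e : α → M) : Prop :=
  ∀ (m : ℕ) (φ : L.Formula (α ⊕ Fin m)) (c : Fin m → M), (∀ k, c k ∈ A) →
    (φ.Realize (Sum.elim d c) ↔ φ.Realize (Sum.elim e c))

/-- `b, b'` start an `A`-indiscernible sequence. -/
def StartIndisc (A : Set M) {α : Type*} (b b' : α → M) : Prop :=
  ∃ c : ℕ → α → M, IndiscSeqOver (L := L) A c ∧ c 0 = b ∧ c 1 = b'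

/-- The Lascar distance of `b, b'` over `A` is at most `n`. -/
def LascarDistLE (A : Set M) {α : Type*} (b b' : α → M) (n : ℕ) : Prop :=
  ∃ c : Fin (n + 1) → α → M, c 0 = b ∧ c (Fin.last n) = b' ∧
    ∀ i : Fin n, StartIndisc (L := L) A (c i.castSucc) (c i.succ)

/-- `b ≡ᴸ_A b'` : equality of Lascar strong types over `A`. -/
def LascarEq (A : Set M) {α : Type*} (b b' : α → M) : Prop :=
  ∃ n : ℕ, LascarDistLE (L := L) A b b' n

/-- A Morley sequence over `A`: `A`-indiscernible and `tp(c_i / A c_{<i})` does not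
fork over `A`. -/
def IsMorleySeqOver (A : Set M) {α : Type*} (c : ℕ → α → M) : Prop :=
  IndiscSeqOver (L := L) A c ∧
    ∀ i : ℕ, ¬TypeForksOver (L := L) (c i) (A ∪ {x | ∃ j t, j < i ∧ c j t = x}) A

/-- `b, b'` start a Morley sequence over `A`. -/
def StartMorley (A : Set M) {α : Type*} (b b' : α → M) : Prop :=
  ∃ c : ℕ → α → M, IsMorleySeqOver (L := L) A c ∧ c 0 = b ∧ c 1 = b'

/-- `≡′_A` : the equivalence relation generated by "starting a common Morley
sequence over `A` in either order". -/
def EqPrimeOver (A : Set M) {α : Type*} (b b' : α → M) : Prop :=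
  Relation.EqvGen (fun x y => StartMorley (L := L) A x y ∨ StartMorley (L := L) A y x) b b'


/-- `T` is NIP: every formula has finite alternation rank. -/
def IsNIP (L : Language) (M : Type*) [L.Structure M] : Prop :=
  ∀ (n m : ℕ) (φ : L.Formula (Fin n ⊕ Fin m)), ∃ k : ℕ,
    ∀ (c : ℕ → Fin m → M), IndiscSeqOver (L := L) (∅ : Set M) c →
      ∀ d : Fin n → M, ¬∀ i, i < 2 * k → (φ.Realize (Sum.elim d (c i)) ↔ Even i)

section ResilienceAux

variable {n m : ℕ}

/-- One signed conjunct of the pattern formula. -/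
noncomputable def pattConj (φ : L.Formula (Fin n ⊕ Fin m)) {β : Type*} (sgn : Bool)
    (blk : Fin m → β) : L.Formula (β ⊕ Fin n) :=
  if sgn then
    φ.relabel (Sum.elim (fun u : Fin n => Sum.inr u) fun u : Fin m => Sum.inl (blk u))
  else
    (φ.relabel (Sum.elim (fun u : Fin n => Sum.inr u) fun u : Fin m => Sum.inl (blk u))).not

/-- The pattern formula `∃ x, ⋀_t φ^{sgn t}(x, blk t)`. -/
noncomputable def pattFormula (φ : L.Formula (Fin n ⊕ Fin m)) {β : Type*} (N : ℕ)
    (sgn : Fin N → Bool) (blk : Fin N → Fin m → β) : L.Formula β :=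
  Formula.iExs (Fin n)
    (((List.finRange N).map fun t => pattConj φ (sgn t) (blk t)).foldr (· ⊓ ·) ⊤)

lemma realize_listConj {β : Type*} (l : List (L.Formula β)) (w : β → M) :
    (l.foldr (· ⊓ ·) ⊤ : L.Formula β).Realize w ↔ ∀ ψ ∈ l, ψ.Realize w := by
  induction l with
  | nil => simp [Formula.realize_top]
  | cons hd tl ih => simp [Formula.realize_inf, ih]

lemma realize_pattConj (φ : L.Formula (Fin n ⊕ Fin m)) {β : Type*} (sgn : Bool)
    (blk : Fin m → β) (v : β → M) (x : Fin n → M) :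
    (pattConj φ sgn blk).Realize (Sum.elim v x) ↔
      (φ.Realize (Sum.elim x fun u => v (blk u)) ↔ sgn = true) := by
  have hg : (Sum.elim v x) ∘
      (Sum.elim (fun u : Fin n => Sum.inr u) fun u : Fin m => Sum.inl (blk u)) =
      Sum.elim x fun u => v (blk u) := by
    funext z
    cases z with
    | inl u => rfl
    | inr u => rfl
  cases sgn with
  | false =>
    rw [pattConj, if_neg (by simp : ¬(false = true)), Formula.realize_not,
      Formula.realize_relabel, hg]
    simp
  | true =>
    rw [pattConj, if_pos rfl, Formula.realize_relabel, hg]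
    simp

lemma realize_pattFormula (φ : L.Formula (Fin n ⊕ Fin m)) {β : Type*} (N : ℕ)
    (sgn : Fin N → Bool) (blk : Fin N → Fin m → β) (v : β → M) :
    (pattFormula φ N sgn blk).Realize v ↔
      ∃ x : Fin n → M, ∀ t : Fin N,
        (φ.Realize (Sum.elim x fun u => v (blk t u)) ↔ sgn t = true) := by
  rw [pattFormula, Formula.realize_iExs]
  refine exists_congr fun x => ?_
  have hw : (fun z : β ⊕ Fin n => Sum.elim v x (id z)) = Sum.elim v x := by
    funext z; simp
  rw [realize_listConj]
  constructor
  · intro h t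
    have := h _ (List.mem_map_of_mem (List.mem_finRange t))
    rwa [realize_pattConj] at this
  · intro h ψ hψ
    obtain ⟨t, -, rfl⟩ := List.mem_map.mp hψ
    rw [realize_pattConj]
    exact h t

lemma strictMono_fin1 {f : Fin 1 → ℚ} : StrictMono f := by
  intro s t hst
  exact absurd (Subsingleton.elim s t) (ne_of_lt hst)

end ResilienceAux

/-- every NIP theory is resilient. -/
theorem resilient_of_NIP (hNIP : IsNIP L M) {n m : ℕ} (φ : L.Formula (Fin n ⊕ Fin m))
    (a b : ℚ → Fin m → M)
    (ha : IndiscSeqOver (L := L) (∅ : Set M) a)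
    (hb : IndiscSeqOver (L := L) (∅ : Set M) b)
    (hab : a 0 = b 0)
    (hbo : IndiscSeqOver (L := L) {x | ∃ i t, i ≠ 0 ∧ a i t = x} b)
    (hcons : ∃ x : Fin n → M, ∀ i, φ.Realize (Sum.elim x (a i))) :
    ∃ x : Fin n → M, ∀ j, φ.Realize (Sum.elim x (b j)) := by
  by_contra hfail
  push_neg at hfail
  obtain ⟨d, hd⟩ := hcons
  obtain ⟨k, hk⟩ := hNIP n m φ
  -- Main claim: every pattern with at most `r` negative slots is realized along `a`.
  have claim : ∀ (r N : ℕ) (sgn : Fin N → Bool) (q : Fin N → ℚ), StrictMono q →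
      (Finset.univ.filter fun t => sgn t = false).card ≤ r →
      ∃ x : Fin n → M, ∀ t : Fin N,
        (φ.Realize (Sum.elim x (a (q t))) ↔ sgn t = true) := by
    intro r
    induction r with
    | zero =>
      intro N sgn q hq hcard
      refine ⟨d, fun t => ?_⟩
      have hs : sgn t = true := by
        by_contra hft
        have hf : sgn t = false := by
          cases hsgn : sgn t
          · rfl
          · exact absurd hsgn hft
        have htmem : t ∈ Finset.univ.filter fun t' => sgn t' = false :=
          Finset.mem_filter.mpr ⟨Finset.mem_univ _, hf⟩
        have := Finset.card_pos.mpr ⟨t, htmem⟩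
        omega
      simp [hs, hd]
    | succ r ih =>
      intro N sgn q hq hcard
      by_cases hle : (Finset.univ.filter fun t => sgn t = false).card ≤ r
      · exact ih N sgn q hq hle
      have hpos : 0 < (Finset.univ.filter fun t => sgn t = false).card := by omega
      obtain ⟨t₀, ht₀⟩ := Finset.card_pos.mp hpos
      have ht₀f : sgn t₀ = false := (Finset.mem_filter.mp ht₀).2
      -- the auxiliary position tuple with `t₀` at position `0`
      set q' : Fin N → ℚ := fun t => (t.val : ℚ) - (t₀.val : ℚ) with hq'def
      have hq'mono : StrictMono q' := by
        intro s t hst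
        have : (s.val : ℚ) < (t.val : ℚ) := by exact_mod_cast hst
        simpa [hq'def] using sub_lt_sub_right this ((t₀.val : ℚ))
      have hq'zero : ∀ t : Fin N, q' t = 0 ↔ t = t₀ := by
        intro t
        constructor
        · intro h
          simp only [hq'def] at h
          have h2 : (t.val : ℚ) = (t₀.val : ℚ) := sub_eq_zero.mp h
          exact Fin.ext (by exact_mod_cast h2)
        · rintro rfl
          simp [hq'def]
      -- the inductive witness, with the `t₀`-slot weakened to positive
      have hcard' :
          (Finset.univ.filter fun t => Function.update sgn t₀ true t = false).card ≤ r := by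
        have hsub : (Finset.univ.filter fun t => Function.update sgn t₀ true t = false) ⊆
            (Finset.univ.filter fun t => sgn t = false).erase t₀ := by
          intro t htm
          simp only [Finset.mem_filter, Finset.mem_univ, true_and] at htm
          rcases eq_or_ne t t₀ with rfl | hne
          · rw [Function.update_self] at htm
            exact absurd htm (by simp)
          · rw [Function.update_of_ne hne] at htm
            exact Finset.mem_erase.mpr ⟨hne, Finset.mem_filter.mpr ⟨Finset.mem_univ _, htm⟩⟩
        have h1 := Finset.card_le_card hsub
        have h2 := Finset.card_erase_of_mem ht₀
        omega
      obtain ⟨x₀, hx₀⟩ := ih N (Function.update sgn t₀ true) q' hq'mono hcard'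
      obtain ⟨v, hv⟩ := hfail x₀
      -- the `b`-parameter pattern formula
      set pf : Fin (N * m) → M := fun w =>
        if (finProdFinEquiv.symm w).1 = t₀ then a 1 (finProdFinEquiv.symm w).2
        else a (q' (finProdFinEquiv.symm w).1) (finProdFinEquiv.symm w).2 with hpfdef
      set blkB : Fin N → Fin m → ((Fin 1 × Fin m) ⊕ Fin (N * m)) := fun t u =>
        if t = t₀ then Sum.inl ((0 : Fin 1), u) else Sum.inr (finProdFinEquiv (t, u))
        with hblkBdef
      have hbase : (pattFormula φ N sgn blkB).Realize
          (Sum.elim (fun p : Fin 1 × Fin m => b ((fun _ => v) p.1) p.2) pf) := by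
        rw [realize_pattFormula]
        refine ⟨x₀, fun t => ?_⟩
        by_cases h : t = t₀
        · have he : (fun u => Sum.elim (fun p : Fin 1 × Fin m => b v p.2) pf (blkB t u)) =
              b v := by
            funext u
            simp [hblkBdef, h]
          rw [he, h, ht₀f]
          exact iff_of_false hv (by simp)
        · have he : (fun u => Sum.elim (fun p : Fin 1 × Fin m => b v p.2) pf (blkB t u)) =
              a (q' t) := by
            funext u
            have hsym : finProdFinEquiv.symm (finProdFinEquiv (t, u)) = (t, u) :=
              Equiv.symm_apply_apply _ _
            simp only [hblkBdef, if_neg h, Sum.elim_inr, hpfdef, hsym]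
          rw [he]
          have := hx₀ t
          rwa [Function.update_of_ne h] at this
      have hpfmem : ∀ w, pf w ∈ {x | ∃ i t, i ≠ 0 ∧ a i t = x} := by
        intro w
        simp only [hpfdef]
        by_cases h : (finProdFinEquiv.symm w).1 = t₀
        · rw [if_pos h]
          exact ⟨1, (finProdFinEquiv.symm w).2, one_ne_zero, rfl⟩
        · rw [if_neg h]
          refine ⟨q' (finProdFinEquiv.symm w).1, (finProdFinEquiv.symm w).2, ?_, rfl⟩
          intro h0
          exact h ((hq'zero _).mp h0)
      have htrans := hbo 1 (N * m) (pattFormula φ N sgn blkB) pf hpfmem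
        (fun _ => v) (fun _ => (0 : ℚ)) strictMono_fin1 strictMono_fin1
      have hb0 := htrans.mp hbase
      rw [realize_pattFormula] at hb0
      obtain ⟨x₁, hx₁⟩ := hb0
      -- reassemble as a pure `a`-statement at positions `q'`
      set blkA : Fin N → Fin m → ((Fin N × Fin m) ⊕ Fin 0) := fun t u => Sum.inl (t, u)
        with hblkAdef
      have hΨq' : (pattFormula φ N sgn blkA).Realize
          (Sum.elim (fun p : Fin N × Fin m => a (q' p.1) p.2) fun z : Fin 0 => z.elim0) := by
        rw [realize_pattFormula]
        refine ⟨x₁, fun t => ?_⟩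
        have he : (fun u => Sum.elim (fun p : Fin N × Fin m => a (q' p.1) p.2)
            (fun z : Fin 0 => z.elim0) (blkA t u)) = a (q' t) := by
          funext u
          simp [hblkAdef]
        rw [he]
        have h := hx₁ t
        by_cases ht : t = t₀
        · have he2 : (fun u => Sum.elim (fun p : Fin 1 × Fin m => b 0 p.2) pf (blkB t u)) =
              b 0 := by
            funext u
            simp [hblkBdef, ht]
          rw [he2] at h
          have hq0 : a (q' t) = b 0 := by
            rw [(hq'zero t).mpr ht, hab]
          rwa [hq0]
        · have he2 : (fun u => Sum.elim (fun p : Fin 1 × Fin m => b 0 p.2) pf (blkB t u)) =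
              a (q' t) := by
            funext u
            have hsym : finProdFinEquiv.symm (finProdFinEquiv (t, u)) = (t, u) :=
              Equiv.symm_apply_apply _ _
            simp only [hblkBdef, if_neg ht, Sum.elim_inr, hpfdef, hsym]
          rwa [he2] at h
      have htransA := ha N 0 (pattFormula φ N sgn blkA) (fun z : Fin 0 => z.elim0)
        (fun z => z.elim0) q' q hq'mono hq
      have hΨq := htransA.mp hΨq'
      rw [realize_pattFormula] at hΨq
      obtain ⟨x₂, hx₂⟩ := hΨq
      refine ⟨x₂, fun t => ?_⟩
      have := hx₂ t
      have he : (fun u => Sum.elim (fun p : Fin N × Fin m => a (q p.1) p.2)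
          (fun z : Fin 0 => z.elim0) (blkA t u)) = a (q t) := by
        funext u
        simp [hblkAdef]
      rwa [he] at this
  -- Endgame: build a `2k`-alternation, contradicting NIP.
  obtain ⟨x, hx⟩ := claim (2 * k) (2 * k) (fun t => decide (Even t.val))
    (fun t => (t.val : ℚ))
    (by
      intro s t hst
      have h1 : s.val < t.val := hst
      show ((s.val : ℕ) : ℚ) < ((t.val : ℕ) : ℚ)
      exact_mod_cast h1)
    (le_trans (Finset.card_filter_le _ _) (by simp))
  have hc : IndiscSeqOver (L := L) (∅ : Set M) (fun i : ℕ => a (i : ℚ)) := by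
    intro n' m' ψ bp hbp i j hi hj
    exact ha n' m' ψ bp hbp (fun t => ((i t : ℕ) : ℚ)) (fun t => ((j t : ℕ) : ℚ))
      (fun s t hst => by
        show ((i s : ℕ) : ℚ) < ((i t : ℕ) : ℚ)
        exact_mod_cast hi hst)
      (fun s t hst => by
        show ((j s : ℕ) : ℚ) < ((j t : ℕ) : ℚ)
        exact_mod_cast hj hst)
  refine hk (fun i : ℕ => a (i : ℚ)) hc x fun i hi => ?_
  have := hx ⟨i, hi⟩
  simpa [decide_eq_true_eq] using this

end Paper
end

section
/- T is strong² if and only if T is strong³; i.e., if there is an inp³-pattern of infinite depth (parameters b_i allowed from any other rows), then there is an inp²-pattern of infinite depth (parameters b_i only from earlier rows). -/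
open FirstOrder FirstOrder.Language

namespace Paper

variable {L : Language} {M : Type*} [L.Structure M]

/-- There is an inp²-pattern of infinite depth in the variables `Fin n` :
parameters `b_i` come from earlier rows only. -/
def Inp2PatternInf (L : Language) (M : Type*) [L.Structure M] (n : ℕ) : Prop :=
  ∃ (r s : ℕ → ℕ) (φ : ∀ i : ℕ, L.Formula (Fin n ⊕ (Fin (r i) ⊕ Fin (s i))))
    (a : ∀ i : ℕ, ℕ → Fin (r i) → M) (b : ∀ i : ℕ, Fin (s i) → M),
    (∀ i₀ : ℕ, IndiscSeqOver (L := L) {x | ∃ i j t, i ≠ i₀ ∧ a i j t = x} (a i₀)) ∧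
    (∀ (i : ℕ) (k : Fin (s i)), ∃ j l t, j < i ∧ a j l t = b i k) ∧
    (∃ x : Fin n → M, ∀ i, (φ i).Realize (Sum.elim x (Sum.elim (a i 0) (b i)))) ∧
    (∀ i, ¬∃ x : Fin n → M, ∀ j, (φ i).Realize (Sum.elim x (Sum.elim (a i j) (b i))))

/-- There is an inp³-pattern of infinite depth in the variables `Fin n` :
parameters `b_i` may come from any other rows. -/
def Inp3PatternInf (L : Language) (M : Type*) [L.Structure M] (n : ℕ) : Prop :=
  ∃ (r s : ℕ → ℕ) (φ : ∀ i : ℕ, L.Formula (Fin n ⊕ (Fin (r i) ⊕ Fin (s i))))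
    (a : ∀ i : ℕ, ℕ → Fin (r i) → M) (b : ∀ i : ℕ, Fin (s i) → M),
    (∀ i₀ : ℕ, IndiscSeqOver (L := L) {x | ∃ i j t, i ≠ i₀ ∧ a i j t = x} (a i₀)) ∧
    (∀ (i : ℕ) (k : Fin (s i)), ∃ j l t, j ≠ i ∧ a j l t = b i k) ∧
    (∃ x : Fin n → M, ∀ i, (φ i).Realize (Sum.elim x (Sum.elim (a i 0) (b i)))) ∧
    (∀ i, ¬∃ x : Fin n → M, ∀ j, (φ i).Realize (Sum.elim x (Sum.elim (a i j) (b i))))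

/-- `T` is strong². -/
def Strong2 (L : Language) (M : Type*) [L.Structure M] : Prop :=
  ∀ n : ℕ, ¬Inp2PatternInf L M n

/-- `T` is strong³. -/
def Strong3 (L : Language) (M : Type*) [L.Structure M] : Prop :=
  ∀ n : ℕ, ¬Inp3PatternInf L M n

/-! ### Auxiliary machinery for `strong2_iff_strong3` -/

section Strong23Aux

/-- Appending constant coordinates (taken from the parameter set `S`) to an
`S`-indiscernible sequence keeps it indiscernible over any `B ⊆ S`. -/
private lemma indiscSeqOver_append {B S : Set M} (hBS : B ⊆ S) {rr g : ℕ}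
    {a : ℕ → Fin rr → M} (ha : IndiscSeqOver (L := L) S a)
    {c : Fin g → M} (hc : ∀ u, c u ∈ S) :
    IndiscSeqOver (L := L) B (fun j y => Sum.elim (a j) c (finSumFinEquiv.symm y)) := by
  intro nn m φ bb hbb i j hi hj
  let ρ : (Fin nn × Fin (rr + g)) ⊕ Fin m → (Fin nn × Fin rr) ⊕ Fin (m + nn * g) :=
    Sum.elim
      (fun q => Sum.elim (fun y => Sum.inl (q.1, y))
        (fun u => Sum.inr (finSumFinEquiv (Sum.inr (finProdFinEquiv (q.1, u)))))
        (finSumFinEquiv.symm q.2))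
      (fun k => Sum.inr (finSumFinEquiv (Sum.inl k)))
  let bb' : Fin (m + nn * g) → M :=
    fun q => Sum.elim bb (fun e => c (finProdFinEquiv.symm e).2) (finSumFinEquiv.symm q)
  have hbb'S : ∀ q, bb' q ∈ S := by
    intro q
    show Sum.elim bb (fun e => c (finProdFinEquiv.symm e).2) (finSumFinEquiv.symm q) ∈ S
    rcases finSumFinEquiv.symm q with k | e
    · exact hBS (hbb k)
    · exact hc _
  have main := ha nn (m + nn * g) (φ.relabel ρ) bb' hbb'S i j hi hj
  rw [Formula.realize_relabel, Formula.realize_relabel] at main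
  have compi : ∀ ii : Fin nn → ℕ,
      (Sum.elim (fun p => a (ii p.1) p.2) bb') ∘ ρ
        = fun v => Sum.elim
            (fun p : Fin nn × Fin (rr + g) => Sum.elim (a (ii p.1)) c (finSumFinEquiv.symm p.2))
            bb v := by
    intro ii; funext v
    rcases v with q | k
    · show Sum.elim (fun p => a (ii p.1) p.2) bb'
        (Sum.elim (fun y => Sum.inl (q.1, y))
          (fun u => Sum.inr (finSumFinEquiv (Sum.inr (finProdFinEquiv (q.1, u)))))
          (finSumFinEquiv.symm q.2)) = Sum.elim (a (ii q.1)) c (finSumFinEquiv.symm q.2)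
      rcases finSumFinEquiv.symm q.2 with y | u
      · rfl
      · show Sum.elim bb (fun e => c (finProdFinEquiv.symm e).2)
          (finSumFinEquiv.symm (finSumFinEquiv (Sum.inr (finProdFinEquiv (q.1, u))))) = c u
        simp only [Equiv.symm_apply_apply, Sum.elim_inr]
    · show Sum.elim bb (fun e => c (finProdFinEquiv.symm e).2)
        (finSumFinEquiv.symm (finSumFinEquiv (Sum.inl k))) = bb k
      simp only [Equiv.symm_apply_apply, Sum.elim_inl]
  rw [compi i, compi j] at main
  exact main

private def Useq (D : ℕ → Finset ℕ) : ℕ → Finset ℕ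
  | 0 => ∅
  | k + 1 => insert ((Useq D k).sup id + 1) (Useq D k ∪ D ((Useq D k).sup id + 1))

/-- The `k`-th "fresh" row index. -/
private def pseq (D : ℕ → Finset ℕ) (k : ℕ) : ℕ := (Useq D k).sup id + 1

private lemma Useq_succ (D : ℕ → Finset ℕ) (k : ℕ) :
    Useq D (k + 1) = insert (pseq D k) (Useq D k ∪ D (pseq D k)) := rfl

private lemma pseq_not_mem (D : ℕ → Finset ℕ) (k : ℕ) : pseq D k ∉ Useq D k := by
  intro h
  have := Finset.le_sup (f := id) h
  simp only [id] at this
  simp only [pseq] at this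
  omega

private lemma pseq_mem_succ (D : ℕ → Finset ℕ) (k : ℕ) : pseq D k ∈ Useq D (k + 1) := by
  rw [Useq_succ]; exact Finset.mem_insert_self _ _

private lemma Dset_sub_succ (D : ℕ → Finset ℕ) (k : ℕ) : D (pseq D k) ⊆ Useq D (k + 1) := by
  rw [Useq_succ]
  intro x hx
  exact Finset.mem_insert_of_mem (Finset.mem_union_right _ hx)

private lemma Useq_mono (D : ℕ → Finset ℕ) : ∀ {k m : ℕ}, k ≤ m → Useq D k ⊆ Useq D m := by
  intro k m h
  induction m with
  | zero => obtain rfl := Nat.le_zero.mp h; exact subset_rfl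
  | succ m ih =>
    rcases Nat.eq_or_lt_of_le h with rfl | h'
    · exact subset_rfl
    · refine (ih (Nat.lt_succ_iff.mp h')).trans ?_
      rw [Useq_succ]
      intro x hx
      exact Finset.mem_insert_of_mem (Finset.mem_union_left _ hx)

private lemma pseq_strictMono (D : ℕ → Finset ℕ) : StrictMono (pseq D) := by
  intro k m h
  have h1 : pseq D k ∈ Useq D m := Useq_mono D (Nat.succ_le_of_lt h) (pseq_mem_succ D k)
  have h2 := Finset.le_sup (f := id) h1
  simp only [id] at h2
  show pseq D k < (Useq D m).sup id + 1
  omega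

private lemma inp3_to_inp2 {n : ℕ} (h : Inp3PatternInf L M n) : Inp2PatternInf L M n := by
  classical
  obtain ⟨r, s, φ, a, b, H1, H2, H3, H4⟩ := h
  choose Drow Dcol Dcomp hDne hDeq using H2
  let D : ℕ → Finset ℕ := fun i => Finset.image (Drow i) Finset.univ
  let p : ℕ → ℕ := pseq D
  have hpinj : Function.Injective p := (pseq_strictMono D).injective
  have hDmem : ∀ i (t : Fin (s i)), Drow i t ∈ D i :=
    fun i t => Finset.mem_image_of_mem _ (Finset.mem_univ t)
  have hCon : ∀ k (t : Fin (s (p k))), (¬ ∃ l, l < k ∧ Drow (p k) t = p l) →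
      ∀ m, Drow (p k) t ≠ p m := by
    intro k t hcon m hEq
    rcases lt_trichotomy m k with hmk | rfl | hkm
    · exact hcon ⟨m, hmk, hEq⟩
    · exact hDne (p m) t hEq
    · have h1 : Drow (p k) t ∈ Useq D (k + 1) := Dset_sub_succ D k (hDmem _ t)
      have h2 : Drow (p k) t ∈ Useq D m := Useq_mono D (Nat.succ_le_of_lt hkm) h1
      rw [hEq] at h2
      exact pseq_not_mem D m h2
  let Par : ∀ k, Fin (s (p k)) → Prop := fun k t => ∃ l, l < k ∧ Drow (p k) t = p l
  let sP : ℕ → ℕ := fun k => Fintype.card {t : Fin (s (p k)) // Par k t}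
  let sC : ℕ → ℕ := fun k => Fintype.card {t : Fin (s (p k)) // ¬ Par k t}
  let eP : ∀ k, {t : Fin (s (p k)) // Par k t} ≃ Fin (sP k) := fun k => Fintype.equivFin _
  let eC : ∀ k, {t : Fin (s (p k)) // ¬ Par k t} ≃ Fin (sC k) := fun k => Fintype.equivFin _
  let cst : ∀ k, Fin (sC k) → M := fun k u => b (p k) ((eC k).symm u).1
  let a' : ∀ k : ℕ, ℕ → Fin (r (p k) + sC k) → M :=
    fun k j y => Sum.elim (a (p k) j) (cst k) (finSumFinEquiv.symm y)
  let b' : ∀ k : ℕ, Fin (sP k) → M := fun k u => b (p k) ((eP k).symm u).1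
  let ρf : ∀ k, (Fin n ⊕ (Fin (r (p k)) ⊕ Fin (s (p k)))) →
      (Fin n ⊕ (Fin (r (p k) + sC k) ⊕ Fin (sP k))) :=
    fun k v => Sum.elim Sum.inl (Sum.elim
      (fun y => Sum.inr (Sum.inl (finSumFinEquiv (Sum.inl y))))
      (fun t => if h : Par k t then Sum.inr (Sum.inr (eP k ⟨t, h⟩))
        else Sum.inr (Sum.inl (finSumFinEquiv (Sum.inr (eC k ⟨t, h⟩)))))) v
  let φ' : ∀ k : ℕ, L.Formula (Fin n ⊕ (Fin (r (p k) + sC k) ⊕ Fin (sP k))) :=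
    fun k => (φ (p k)).relabel (ρf k)
  have hkey : ∀ (k : ℕ) (x : Fin n → M) (jc : ℕ),
      ((φ' k).Realize (Sum.elim x (Sum.elim (a' k jc) (b' k))) ↔
        (φ (p k)).Realize (Sum.elim x (Sum.elim (a (p k) jc) (b (p k))))) := by
    intro k x jc
    show ((φ (p k)).relabel (ρf k)).Realize _ ↔ _
    rw [Formula.realize_relabel]
    have hcomp : (Sum.elim x (Sum.elim (a' k jc) (b' k))) ∘ (ρf k)
        = Sum.elim x (Sum.elim (a (p k) jc) (b (p k))) := by
      funext v
      rcases v with x0 | w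
      · rfl
      rcases w with y | t
      · show Sum.elim (a (p k) jc) (cst k)
          (finSumFinEquiv.symm (finSumFinEquiv (Sum.inl y))) = a (p k) jc y
        simp only [Equiv.symm_apply_apply, Sum.elim_inl]
      · show Sum.elim x (Sum.elim (a' k jc) (b' k))
          (if h : Par k t then Sum.inr (Sum.inr (eP k ⟨t, h⟩))
            else Sum.inr (Sum.inl (finSumFinEquiv (Sum.inr (eC k ⟨t, h⟩))))) = b (p k) t
        split_ifs with hpar
        · show b (p k) ((eP k).symm (eP k ⟨t, hpar⟩)).1 = b (p k) t
          rw [Equiv.symm_apply_apply]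
        · show Sum.elim (a (p k) jc) (cst k)
            (finSumFinEquiv.symm (finSumFinEquiv (Sum.inr (eC k ⟨t, hpar⟩)))) = b (p k) t
          simp only [Equiv.symm_apply_apply, Sum.elim_inr]
          show b (p k) ((eC k).symm (eC k ⟨t, hpar⟩)).1 = b (p k) t
          rw [Equiv.symm_apply_apply]
    rw [hcomp]
  refine ⟨fun k => r (p k) + sC k, sP, φ', a', b', ?_, ?_, ?_, ?_⟩
  · -- mutual indiscernibility of the new rows
    intro k
    have hBS : {x | ∃ i j t, i ≠ k ∧ a' i j t = x} ⊆ {x | ∃ i j t, i ≠ p k ∧ a i j t = x} := by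
      rintro x ⟨i, jj, y, hik, rfl⟩
      show Sum.elim (a (p i) jj) (cst i) (finSumFinEquiv.symm y)
        ∈ {x | ∃ i' j' t', i' ≠ p k ∧ a i' j' t' = x}
      rcases finSumFinEquiv.symm y with y0 | u
      · exact ⟨p i, jj, y0, hpinj.ne hik, rfl⟩
      · exact ⟨Drow (p i) ((eC i).symm u).1, Dcol (p i) ((eC i).symm u).1,
          Dcomp (p i) ((eC i).symm u).1, hCon i ((eC i).symm u).1 ((eC i).symm u).2 k,
          hDeq (p i) ((eC i).symm u).1⟩
    have hcS : ∀ u, cst k u ∈ {x | ∃ i j t, i ≠ p k ∧ a i j t = x} := by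
      intro u
      exact ⟨Drow (p k) ((eC k).symm u).1, Dcol (p k) ((eC k).symm u).1,
        Dcomp (p k) ((eC k).symm u).1, hCon k ((eC k).symm u).1 ((eC k).symm u).2 k,
        hDeq (p k) ((eC k).symm u).1⟩
    exact indiscSeqOver_append hBS (H1 (p k)) hcS
  · -- parameters come from strictly earlier rows
    intro k u
    obtain ⟨l, hlk, hrow⟩ := ((eP k).symm u).2
    have haux : ∀ (m : ℕ) (hm : Drow (p k) ((eP k).symm u).1 = m),
        a m (Dcol (p k) ((eP k).symm u).1)
          (Fin.cast (congrArg r hm) (Dcomp (p k) ((eP k).symm u).1))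
          = b (p k) ((eP k).symm u).1 := by
      intro m hm
      subst hm
      simpa using hDeq (p k) ((eP k).symm u).1
    refine ⟨l, Dcol (p k) ((eP k).symm u).1,
      finSumFinEquiv (Sum.inl (Fin.cast (congrArg r hrow) (Dcomp (p k) ((eP k).symm u).1))),
      hlk, ?_⟩
    show Sum.elim (a (p l) (Dcol (p k) ((eP k).symm u).1)) (cst l)
      (finSumFinEquiv.symm (finSumFinEquiv
        (Sum.inl (Fin.cast (congrArg r hrow) (Dcomp (p k) ((eP k).symm u).1)))))
      = b (p k) ((eP k).symm u).1
    rw [Equiv.symm_apply_apply]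
    exact haux (p l) hrow
  · -- consistency of the path
    obtain ⟨x, hx⟩ := H3
    exact ⟨x, fun k => (hkey k x 0).mpr (hx (p k))⟩
  · -- inconsistency of each row
    rintro k ⟨x, hx⟩
    exact H4 (p k) ⟨x, fun j => (hkey k x j).mp (hx j)⟩

private lemma inp2_to_inp3 {n : ℕ} (h : Inp2PatternInf L M n) : Inp3PatternInf L M n := by
  obtain ⟨r, s, φ, a, b, H1, H2, H3, H4⟩ := h
  refine ⟨r, s, φ, a, b, H1, ?_, H3, H4⟩
  intro i k
  obtain ⟨j, l, t, hj, he⟩ := H2 i k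
  exact ⟨j, l, t, Nat.ne_of_lt hj, he⟩

end Strong23Aux

/-- `T` is strong² iff it is strong³. -/
theorem strong2_iff_strong3 : Strong2 L M ↔ Strong3 L M := by
  constructor
  · intro h2 n h3p
    exact h2 n (inp3_to_inp2 h3p)
  · intro h3 n h2p
    exact h3 n (inp2_to_inp3 h2p)

end Paper
end
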